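/- Let M ⊆ ℝⁿ be closed, B : ℝⁿ → ℝᵐ continuous, and K := {x ∈ M : B_i(x) ≤ 0 for all i}. Let x ∈ ∂K ∩ int(M), set I_x := {i : B_i(x) = 0}, and assume B is continuously differentiable on a neighborhood of x with ∇B_i(x) ≠ 0 for all i ∈ I_x. Then D_{int(K)}(x) = {v ∈ ℝⁿ : ⟨∇B_i(x), v⟩ < 0 for all i ∈ I_x}. -/

import Mathlib

open Filter Set
open scoped RealInnerProductSpace Topology

/-- The Dubovitsky–Miliutin cone of `S` at `x`. -/
def dmCone {n : ℕ} (S : Set (EuclideanSpace ℝ (Fin n)))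
    (x : EuclideanSpace ℝ (Fin n)) : Set (EuclideanSpace ℝ (Fin n)) :=
  {v | ∃ α > (0 : ℝ), ∃ ε > (0 : ℝ), ∀ δ ∈ Set.Ioc (0 : ℝ) α,
      ∀ w ∈ Metric.closedBall (0 : EuclideanSpace ℝ (Fin n)) ε, x + δ • (v + w) ∈ S}

set_option maxHeartbeats 1000000 in
theorem stmt_7 {n m : ℕ} (M : Set (EuclideanSpace ℝ (Fin n))) (hM : IsClosed M)
    (B : Fin m → EuclideanSpace ℝ (Fin n) → ℝ) (hBcont : ∀ i, Continuous (B i))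
    (K : Set (EuclideanSpace ℝ (Fin n))) (hK : K = {y ∈ M | ∀ i, B i y ≤ 0})
    (x : EuclideanSpace ℝ (Fin n)) (hx : x ∈ frontier K ∩ interior M)
    (I : Set (Fin m)) (hI : I = {i | B i x = 0})
    (U : Set (EuclideanSpace ℝ (Fin n))) (hU : IsOpen U) (hxU : x ∈ U)
    (hB : ∀ i, ContDiffOn ℝ 1 (B i) U)
    (hgrad : ∀ i ∈ I, gradient (B i) x ≠ 0) :
    dmCone (interior K) x = {v | ∀ i ∈ I, ⟪gradient (B i) x, v⟫ < 0} := by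
  have hinner : ∀ (i : Fin m) (y u : EuclideanSpace ℝ (Fin n)),
      ⟪gradient (B i) y, u⟫ = fderiv ℝ (B i) y u := by
    intro i y u
    simp [gradient, InnerProductSpace.toDual_symm_apply]
  have hKclosed : IsClosed K := by
    have hKeq : K = M ∩ ⋂ i, (B i) ⁻¹' Iic (0:ℝ) := by
      rw [hK]; ext y; simp [Set.mem_iInter]
    rw [hKeq]
    exact hM.inter (isClosed_iInter fun i => isClosed_Iic.preimage (hBcont i))
  have hxK : x ∈ K := hKclosed.closure_eq ▸ frontier_subset_closure hx.1
  have hxB : ∀ i, B i x ≤ 0 := (hK ▸ hxK).2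
  have hdiffAt : ∀ (i : Fin m), ∀ y ∈ U, DifferentiableAt ℝ (B i) y := fun i y hy =>
    ((hB i).differentiableOn one_ne_zero).differentiableAt (hU.mem_nhds hy)
  ext v
  simp only [dmCone, Set.mem_setOf_eq]
  constructor
  · rintro ⟨α, hα, ε, hε, hmem⟩ i hiI
    have hBix : B i x = 0 := by rw [hI] at hiI; exact hiI
    set g := gradient (B i) x with hg
    have hg0 : g ≠ 0 := hgrad i hiI
    have hgnorm : (0:ℝ) < ‖g‖ := norm_pos_iff.mpr hg0
    by_contra hcon
    push_neg at hcon
    set w : EuclideanSpace ℝ (Fin n) := (ε / ‖g‖) • g with hw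
    have hwball : w ∈ Metric.closedBall (0 : EuclideanSpace ℝ (Fin n)) ε := by
      simp only [Metric.mem_closedBall, dist_zero_right, hw, norm_smul]
      rw [Real.norm_eq_abs, abs_of_pos (div_pos hε hgnorm),
        div_mul_cancel₀ _ (ne_of_gt hgnorm)]
    set u : EuclideanSpace ℝ (Fin n) := v + w with hu
    have hfd : HasFDerivAt (B i) (fderiv ℝ (B i) x) x := (hdiffAt i x hxU).hasFDerivAt
    have hline : ∀ δ : ℝ, HasDerivAt (fun t : ℝ => x + t • u) u δ := by
      intro δ
      simpa using ((hasDerivAt_id δ).smul_const u).const_add x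
    have hderiv : HasDerivAt (fun δ : ℝ => B i (x + δ • u)) (fderiv ℝ (B i) x u) 0 := by
      have := hfd.comp_hasDerivAt_of_eq 0 (hline 0) (by simp)
      exact this
    have hupos : 0 < fderiv ℝ (B i) x u := by
      have h1 : fderiv ℝ (B i) x u = ⟪g, v⟫ + (ε / ‖g‖) * ⟪g, g⟫ := by
        rw [← hinner, hu, inner_add_right, hw, real_inner_smul_right]
      rw [h1, real_inner_self_eq_norm_sq]
      have h2 : 0 < (ε / ‖g‖) * ‖g‖ ^ 2 := by positivity
      linarith
    have hslope : Tendsto (slope (fun δ : ℝ => B i (x + δ • u)) 0) (𝓝[>] 0)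
        (𝓝 (fderiv ℝ (B i) x u)) := by
      have hts := hasDerivAt_iff_tendsto_slope.mp hderiv
      exact hts.mono_left (nhdsWithin_mono 0 (fun t ht => ne_of_gt ht))
    have hev : ∀ᶠ δ in 𝓝[>] (0:ℝ), 0 < slope (fun δ : ℝ => B i (x + δ • u)) 0 δ :=
      hslope.eventually (eventually_gt_nhds hupos)
    have hev2 : ∀ᶠ δ in 𝓝[>] (0:ℝ), δ ∈ Set.Ioc (0:ℝ) α :=
      Ioc_mem_nhdsGT_of_mem ⟨le_refl 0, hα⟩
    obtain ⟨δ, hδs, hδIoc⟩ := (hev.and hev2).exists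
    have hle : B i (x + δ • u) ≤ 0 := by
      have hmemK : x + δ • u ∈ K := interior_subset (hmem δ hδIoc w hwball)
      exact (hK ▸ hmemK).2 i
    have hpos : 0 < B i (x + δ • u) := by
      have hδ0 : (0:ℝ) < δ := hδIoc.1
      have hse : slope (fun δ : ℝ => B i (x + δ • u)) 0 δ = B i (x + δ • u) / δ := by
        simp [slope_def_field, hBix]
      rw [hse] at hδs
      have hm := mul_pos hδs hδ0
      rwa [div_mul_cancel₀ _ (ne_of_gt hδ0)] at hm
    linarith
  · intro hv
    set W : Set (EuclideanSpace ℝ (Fin n)) :=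
      interior M ∩ ⋂ i, (B i) ⁻¹' Iio (0:ℝ) with hW
    have hWopen : IsOpen W :=
      isOpen_interior.inter (isOpen_iInter_of_finite fun i => isOpen_Iio.preimage (hBcont i))
    have hWK : W ⊆ K := by
      intro y hy
      rw [hK]
      refine ⟨interior_subset hy.1, fun i => ?_⟩
      exact le_of_lt (Set.mem_iInter.mp hy.2 i)
    have hWint : W ⊆ interior K := interior_maximal hWK hWopen
    have hA : ∀ᶠ p : EuclideanSpace ℝ (Fin n) × EuclideanSpace ℝ (Fin n) in 𝓝 (x, v),
        p.1 ∈ interior M ∧ p.1 ∈ U ∧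
        (∀ i, i ∈ I → fderiv ℝ (B i) p.1 p.2 < 0) ∧ (∀ i, i ∉ I → B i p.1 < 0) := by
      have h1 : ∀ᶠ p : EuclideanSpace ℝ (Fin n) × EuclideanSpace ℝ (Fin n) in 𝓝 (x, v),
          p.1 ∈ interior M :=
        (continuousAt_fst).eventually_mem (isOpen_interior.mem_nhds hx.2)
      have h2 : ∀ᶠ p : EuclideanSpace ℝ (Fin n) × EuclideanSpace ℝ (Fin n) in 𝓝 (x, v),
          p.1 ∈ U :=
        (continuousAt_fst).eventually_mem (hU.mem_nhds hxU)
      have h3 : ∀ᶠ p : EuclideanSpace ℝ (Fin n) × EuclideanSpace ℝ (Fin n) in 𝓝 (x, v),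
          ∀ i, i ∈ I → fderiv ℝ (B i) p.1 p.2 < 0 := by
        rw [eventually_all]
        intro i
        by_cases hiI : i ∈ I
        · have hcf : ContinuousOn (fderiv ℝ (B i)) U :=
            (hB i).continuousOn_fderiv_of_isOpen hU le_rfl
          have hc2 : ContinuousOn
              (fun p : EuclideanSpace ℝ (Fin n) × EuclideanSpace ℝ (Fin n) =>
                fderiv ℝ (B i) p.1 p.2) (U ×ˢ univ) :=
            ContinuousOn.clm_apply (hcf.comp continuousOn_fst (fun p hp => hp.1))
              continuousOn_snd
          have hcAt : ContinuousAt
              (fun p : EuclideanSpace ℝ (Fin n) × EuclideanSpace ℝ (Fin n) =>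
                fderiv ℝ (B i) p.1 p.2) (x, v) :=
            hc2.continuousAt ((hU.prod isOpen_univ).mem_nhds ⟨hxU, trivial⟩)
          have hneg : fderiv ℝ (B i) x v < 0 := by rw [← hinner]; exact hv i hiI
          exact (hcAt.eventually (eventually_lt_nhds hneg)).mono fun p hp _ => hp
        · exact Eventually.of_forall fun p h => absurd h hiI
      have h4 : ∀ᶠ p : EuclideanSpace ℝ (Fin n) × EuclideanSpace ℝ (Fin n) in 𝓝 (x, v),
          ∀ i, i ∉ I → B i p.1 < 0 := by
        rw [eventually_all]
        intro i
        by_cases hiI : i ∈ I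
        · exact Eventually.of_forall fun p h => absurd hiI h
        · have hneg : B i x < 0 := by
            rcases lt_or_eq_of_le (hxB i) with h | h
            · exact h
            · exact absurd (show i ∈ I by rw [hI]; simp only [Set.mem_setOf_eq]; exact h) hiI
          have hcAt : ContinuousAt
              (fun p : EuclideanSpace ℝ (Fin n) × EuclideanSpace ℝ (Fin n) => B i p.1)
              (x, v) := ((hBcont i).comp continuous_fst).continuousAt
          exact (hcAt.eventually (eventually_lt_nhds hneg)).mono fun p hp _ => hp
      filter_upwards [h1, h2, h3, h4] with p p1 p2 p3 p4 using ⟨p1, p2, p3, p4⟩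
    obtain ⟨s, hs, hball⟩ := Metric.mem_nhds_iff.mp hA
    have hballm : ∀ y ∈ Metric.ball x s, ∀ u ∈ Metric.ball v s,
        y ∈ interior M ∧ y ∈ U ∧ (∀ i, i ∈ I → fderiv ℝ (B i) y u < 0) ∧
        (∀ i, i ∉ I → B i y < 0) := by
      intro y hy u hu
      have hmem2 : (y, u) ∈ Metric.ball (x, v) s := by
        rw [← ball_prod_same]
        exact ⟨hy, hu⟩
      exact hball hmem2
    set ε : ℝ := s / 2 with hε
    set α : ℝ := s / (2 * (‖v‖ + s + 1)) with hα
    have hvpos : (0:ℝ) ≤ ‖v‖ := norm_nonneg v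
    have hαpos : 0 < α := by positivity
    have hεpos : 0 < ε := by positivity
    refine ⟨α, hαpos, ε, hεpos, ?_⟩
    intro δ hδ w hwball
    set u : EuclideanSpace ℝ (Fin n) := v + w with hu
    have hδ0 : 0 < δ := hδ.1
    have hδα : δ ≤ α := hδ.2
    have hwnorm : ‖w‖ ≤ ε := by
      simpa [dist_zero_right] using hwball
    have hunorm : ‖u‖ ≤ ‖v‖ + ε := by
      calc ‖u‖ ≤ ‖v‖ + ‖w‖ := norm_add_le v w
        _ ≤ ‖v‖ + ε := by linarith
    have huball : u ∈ Metric.ball v s := by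
      rw [Metric.mem_ball, dist_eq_norm]
      have huv : u - v = w := by rw [hu]; abel
      rw [huv]
      linarith
    have hkey : ∀ t : ℝ, t ∈ Set.Icc 0 δ → x + t • u ∈ Metric.ball x s := by
      intro t ht
      rw [Metric.mem_ball, dist_eq_norm]
      have h1 : x + t • u - x = t • u := by abel
      rw [h1, norm_smul, Real.norm_eq_abs, abs_of_nonneg ht.1]
      have h2 : t * ‖u‖ ≤ δ * (‖v‖ + ε) :=
        mul_le_mul ht.2 hunorm (norm_nonneg u) hδ0.le
      have h3 : δ * (‖v‖ + ε) ≤ α * (‖v‖ + ε) :=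
        mul_le_mul_of_nonneg_right hδα (by positivity)
      have h4 : α * (‖v‖ + ε) < s := by
        rw [hα, hε]
        rw [div_mul_eq_mul_div, div_lt_iff₀ (by positivity)]
        nlinarith
      linarith
    apply hWint
    have hmain := hballm (x + δ • u) (hkey δ ⟨hδ0.le, le_refl δ⟩) u huball
    refine ⟨hmain.1, Set.mem_iInter.mpr fun i => ?_⟩
    by_cases hiI : i ∈ I
    · have hBix : B i x = 0 := by rw [hI] at hiI; exact hiI
      set φ : ℝ → ℝ := fun t => B i (x + t • u) with hφ
      have hφcont : ContinuousOn φ (Set.Icc 0 δ) :=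
        ((hBcont i).comp
          (continuous_const.add (continuous_id.smul continuous_const))).continuousOn
      have hφderiv : ∀ t ∈ interior (Set.Icc (0:ℝ) δ), deriv φ t < 0 := by
        intro t ht
        rw [interior_Icc] at ht
        have htIcc : t ∈ Set.Icc (0:ℝ) δ := ⟨ht.1.le, ht.2.le⟩
        have hpt := hballm (x + t • u) (hkey t htIcc) u huball
        have hline : HasDerivAt (fun r : ℝ => x + r • u) u t := by
          simpa using ((hasDerivAt_id t).smul_const u).const_add x
        have hfd : HasFDerivAt (B i) (fderiv ℝ (B i) (x + t • u)) (x + t • u) :=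
          (hdiffAt i _ hpt.2.1).hasFDerivAt
        have hφd : HasDerivAt φ (fderiv ℝ (B i) (x + t • u) u) t :=
          hfd.comp_hasDerivAt t hline
        rw [hφd.deriv]
        exact hpt.2.2.1 i hiI
      have hanti : StrictAntiOn φ (Set.Icc 0 δ) :=
        strictAntiOn_of_deriv_neg (convex_Icc 0 δ) hφcont hφderiv
      have hlt := hanti ⟨le_refl 0, hδ0.le⟩ ⟨hδ0.le, le_refl δ⟩ hδ0
      have hφ0 : φ 0 = 0 := by simp [hφ, hBix]
      rw [hφ0] at hlt
      exact hlt
    · exact hmain.2.2.2 i hiI
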